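/- Let (g,J) be an 8-dimensional nilpotent Lie algebra with weakly non-nilpotent complex structure admitting a (1,0)-basis with equations dη¹ = 0, dη² = η¹³ + η^{1 3̄}, dη³ = iε η^{1 1̄} + iδ η^{1 2̄} − iδ η^{2 1̄}, dη⁴ = A η¹² + B η^{1 1̄}, where ε ∈ {0,1}, δ = ±1, A,B ∈ ℂ (the case ν = 0). Then there is a (1,0)-basis {ω¹,…,ω⁴} in which the structure equations become dω¹ = 0, dω² = ω¹³ + ω^{1 3̄}, dω³ = iε ω^{1 1̄} + iδ ω^{1 2̄} − iδ ω^{2 1̄}, dω⁴ = a ω¹² + B' ω^{1 1̄}, with δ = ±1 and (ε, a, B') one of: (i) a = B' = 0 and ε ∈ {0,1}; (ii) a = 0, B' = 1 and ε ∈ {0,1}; (iii) a = 1, B' ∈ {0,1} and ε = 0; (iv) a = 1, B' ∈ [0,∞) and ε = 1. -/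

import Mathlib

noncomputable section

open Complex Module
open scoped TensorProduct

namespace Paper

/-- The ascending central series of a real Lie algebra. -/
def ascSeries (g : Type*) [LieRing g] [LieAlgebra ℝ g] : ℕ → Submodule ℝ g
  | 0 => ⊥
  | k + 1 =>
    { carrier := {X : g | ∀ Y : g, ⁅X, Y⁆ ∈ ascSeries g k}
      add_mem' := fun ha hb Y => by
        rw [add_lie]; exact Submodule.add_mem _ (ha Y) (hb Y)
      zero_mem' := fun Y => by rw [zero_lie]; exact Submodule.zero_mem _
      smul_mem' := fun c x hx Y => by rw [smul_lie]; exact Submodule.smul_mem _ c (hx Y) }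

/-- A Lie algebra is nilpotent when its ascending central series reaches the whole algebra. -/
def IsNilpotentLie (g : Type*) [LieRing g] [LieAlgebra ℝ g] : Prop :=
  ∃ s : ℕ, ascSeries g s = ⊤

/-- A (integrable) complex structure on a real Lie algebra. -/
structure ComplexStructure (g : Type*) [LieRing g] [LieAlgebra ℝ g] where
  J : g →ₗ[ℝ] g
  j_sq : ∀ X : g, J (J X) = -X
  integrable : ∀ X Y : g, ⁅X, Y⁆ + J ⁅J X, Y⁆ + J ⁅X, J Y⁆ - ⁅J X, J Y⁆ = 0

namespace ComplexStructure

variable {g g' : Type*} [LieRing g] [LieAlgebra ℝ g] [LieRing g'] [LieAlgebra ℝ g']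

/-- The ascending `J`-compatible series `a_k(J)`. -/
def aSeries (Jc : ComplexStructure g) : ℕ → Submodule ℝ g
  | 0 => ⊥
  | k + 1 =>
    { carrier := {X : g | (∀ Y : g, ⁅X, Y⁆ ∈ aSeries Jc k) ∧ (∀ Y : g, ⁅Jc.J X, Y⁆ ∈ aSeries Jc k)}
      add_mem' := fun ha hb => by
        refine ⟨fun Y => ?_, fun Y => ?_⟩
        · rw [add_lie]; exact Submodule.add_mem _ (ha.1 Y) (hb.1 Y)
        · rw [map_add, add_lie]; exact Submodule.add_mem _ (ha.2 Y) (hb.2 Y)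
      zero_mem' := by
        refine ⟨fun Y => ?_, fun Y => ?_⟩
        · rw [zero_lie]; exact Submodule.zero_mem _
        · rw [map_zero, zero_lie]; exact Submodule.zero_mem _
      smul_mem' := fun c x hx => by
        refine ⟨fun Y => ?_, fun Y => ?_⟩
        · rw [smul_lie]; exact Submodule.smul_mem _ c (hx.1 Y)
        · rw [map_smul, smul_lie]; exact Submodule.smul_mem _ c (hx.2 Y) }

/-- Quasi-nilpotent complex structure: `a₁(J) ≠ 0`. -/
def IsQuasiNilpotent (Jc : ComplexStructure g) : Prop := Jc.aSeries 1 ≠ ⊥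

/-- Strongly non-nilpotent complex structure: `a₁(J) = 0`. -/
def IsSnN (Jc : ComplexStructure g) : Prop := Jc.aSeries 1 = ⊥

/-- Weakly non-nilpotent complex structure: `a₁(J) ≠ 0` and the ascending compatible series
stabilizes strictly below `g`. -/
def IsWnN (Jc : ComplexStructure g) : Prop :=
  Jc.aSeries 1 ≠ ⊥ ∧ ∃ t : ℕ, Jc.aSeries t ≠ ⊤ ∧ ∀ l : ℕ, 1 ≤ l → Jc.aSeries (t + l) = Jc.aSeries t

/-- Non-nilpotent complex structure: the ascending compatible series never reaches `g`. -/
def IsNonNilpotent (Jc : ComplexStructure g) : Prop := ∀ t : ℕ, Jc.aSeries t ≠ ⊤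

/-- Equivalence of complex structures. -/
def Equiv (Jc : ComplexStructure g) (Jc' : ComplexStructure g') : Prop :=
  ∃ f : g ≃ₗ⁅ℝ⁆ g', ∀ X : g, f (Jc.J X) = Jc'.J (f X)

end ComplexStructure


/-- Complex conjugate of a complex-valued form. -/
def cF {M : Type*} (α : M → ℂ) : M → ℂ := fun X => (starRingEnd ℂ) (α X)

/-- Wedge product of two 1-forms, as a 2-form. -/
def w2 {M R : Type*} [CommRing R] (α β : M → R) (X Y : M) : R := α X * β Y - α Y * β X

/-- Wedge product of three 1-forms, as a 3-form. -/
def w3 {M R : Type*} [CommRing R] (α β γ : M → R) (X Y Z : M) : R :=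
  α X * w2 β γ Y Z - α Y * w2 β γ X Z + α Z * w2 β γ X Y

/-- Wedge product of four 1-forms, as a 4-form. -/
def w4 {M R : Type*} [CommRing R] (α β γ η : M → R) (W X Y Z : M) : R :=
  α W * w3 β γ η X Y Z - α X * w3 β γ η W Y Z + α Y * w3 β γ η W X Z - α Z * w3 β γ η W X Y

/-- Chevalley–Eilenberg differential of a 1-form: `dα(X,Y) = -α([X,Y])`. -/
def dd {g R : Type*} [LieRing g] [CommRing R] (α : g → R) (X Y : g) : R := -α ⁅X, Y⁆

variable {g : Type*} [LieRing g] [LieAlgebra ℝ g]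

/-- `ω` is a basis of (1,0)-forms for `(g,J)` (here `dim ℝ g = 8`): each `ω k` is of bidegree
(1,0) for `J`, and the joint map `g → ℂ⁴` is bijective (so that `{ω^k, ω̄^k}` is a basis of the
complexified dual). -/
def Is10Basis (Jc : ComplexStructure g) (ω : Fin 4 → (g →ₗ[ℝ] ℂ)) : Prop :=
  (∀ (k : Fin 4) (X : g), ω k (Jc.J X) = Complex.I * ω k X) ∧
  Function.Bijective (fun (X : g) (k : Fin 4) => ω k X)

/-- The complex structure equations (★):
`dω¹ = 0`, `dω² = ω¹³ + ω^{1 3̄}`, `dω³ = iε ω^{1 1̄} + iδ ω^{1 2̄} − iδ ω^{2 1̄}`,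
`dω⁴ = A ω¹² + B ω^{1 1̄} + ν (ω²³ + 2δε ω^{1 3̄} + ω^{2 3̄})`. -/
def StarEq (ω : Fin 4 → (g →ₗ[ℝ] ℂ)) (ε δ ν : ℝ) (A B : ℂ) : Prop :=
  (∀ X Y : g, dd (⇑(ω 0)) X Y = 0) ∧
  (∀ X Y : g, dd (⇑(ω 1)) X Y = w2 (⇑(ω 0)) (⇑(ω 2)) X Y + w2 (⇑(ω 0)) (cF ⇑(ω 2)) X Y) ∧
  (∀ X Y : g, dd (⇑(ω 2)) X Y
      = Complex.I * (ε : ℂ) * w2 (⇑(ω 0)) (cF ⇑(ω 0)) X Y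
        + Complex.I * (δ : ℂ) * w2 (⇑(ω 0)) (cF ⇑(ω 1)) X Y
        - Complex.I * (δ : ℂ) * w2 (⇑(ω 1)) (cF ⇑(ω 0)) X Y) ∧
  (∀ X Y : g, dd (⇑(ω 3)) X Y
      = A * w2 (⇑(ω 0)) (⇑(ω 1)) X Y + B * w2 (⇑(ω 0)) (cF ⇑(ω 0)) X Y
        + (ν : ℂ) * (w2 (⇑(ω 1)) (⇑(ω 2)) X Y
            + 2 * (δ : ℂ) * (ε : ℂ) * w2 (⇑(ω 0)) (cF ⇑(ω 2)) X Y
            + w2 (⇑(ω 1)) (cF ⇑(ω 2)) X Y))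

/-- The admissible range of the parameters `(ε,δ,ν,a,B)` in Theorem 3.1. -/
def Admissible (ε δ ν a : ℝ) (B : ℂ) : Prop :=
  (ε = 0 ∨ ε = 1) ∧ (δ = 1 ∨ δ = -1) ∧
  ((ν = 0 ∧ a = 0 ∧ B = 0) ∨
   (ν = 0 ∧ a = 0 ∧ B = 1) ∨
   ((ν = 0 ∨ ν = 1) ∧ a = 1 - ν ∧ (∃ b : ℝ, 0 ≤ b ∧ B = (b : ℂ)) ∧
      (ε = 0 → (B = 0 ∨ B = 1))) ∨
   (ν = 1 ∧ 0 < a ∧ (ε = 0 → (a = 1 ∧ 0 ≤ B.im))))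

/-- A pseudo-Kähler structure on `(g,J)`: a closed, `J`-invariant, nondegenerate 2-form. -/
structure PseudoKahlerForm (Jc : ComplexStructure g) where
  F : g →ₗ[ℝ] g →ₗ[ℝ] ℝ
  antisymm : ∀ X Y : g, F X Y = -F Y X
  compat : ∀ X Y : g, F (Jc.J X) (Jc.J Y) = F X Y
  closed : ∀ X Y Z : g, F ⁅X, Y⁆ Z - F ⁅X, Z⁆ Y + F ⁅Y, Z⁆ X = 0
  nondeg : ∀ X : g, (∀ Y : g, F X Y = 0) → X = 0


/-- Proposition 3.3: reduction of the structure equations (3.3) in the case ν = 0. -/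

lemma rescale
    {g : Type*} [LieRing g] [LieAlgebra ℝ g]
    (Jc : ComplexStructure g)
    (η : Fin 4 → (g →ₗ[ℝ] ℂ)) (ε δ : ℝ) (A B : ℂ)
    (hη : Is10Basis Jc η) (heq : StarEq η ε δ 0 A B)
    (l1 l4 : ℂ) (r : ℝ) (a : ℝ) (B' : ℂ)
    (h1 : l1 * (starRingEnd ℂ) l1 = 1) (hr : r ≠ 0) (h4 : l4 ≠ 0)
    (hεr : ε = 0 ∨ r = 1)
    (ha : (a : ℂ) * l1 ^ 2 * (r : ℂ) = l4 * A) (hB : B' = l4 * B) :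
    ∃ ω : Fin 4 → (g →ₗ[ℝ] ℂ), Is10Basis Jc ω ∧ StarEq ω ε δ 0 (a : ℂ) B' := by
  have hl1 : l1 ≠ 0 := by
    intro h; rw [h] at h1; simp at h1
  have hrC : (r : ℂ) ≠ 0 := by exact_mod_cast hr
  refine ⟨![l1 • η 0, (l1 * (r : ℂ)) • η 1, ((r : ℝ) : ℂ) • η 2, l4 • η 3], ⟨?_, ?_⟩, ?_, ?_, ?_, ?_⟩
  · intro k X
    fin_cases k <;>
      simp [hη.1 0 X, hη.1 1 X, hη.1 2 X, hη.1 3 X, smul_eq_mul] <;> ring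
  · constructor
    · intro X Y hxy
      apply hη.2.1
      funext k
      have h := congrFun hxy k
      fin_cases k <;> simp [smul_eq_mul] at h ⊢ <;> tauto
    · intro c
      obtain ⟨X, hX⟩ := hη.2.2 ![c 0 / l1, c 1 / (l1 * (r : ℂ)), c 2 / (r : ℂ), c 3 / l4]
      refine ⟨X, ?_⟩
      funext k
      have h0 := congrFun hX 0
      have h1' := congrFun hX 1
      have h2 := congrFun hX 2
      have h3 := congrFun hX 3
      simp at h0 h1' h2 h3
      fin_cases k <;> simp [smul_eq_mul, h0, h1', h2, h3]
      · exact mul_div_cancel₀ _ hl1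
      · exact mul_div_cancel₀ _ (mul_ne_zero hl1 hrC)
      · exact mul_div_cancel₀ _ hrC
      · exact mul_div_cancel₀ _ h4
  · intro X Y
    have e0 := heq.1 X Y
    simp only [dd, w2, cF, LinearMap.smul_apply, smul_eq_mul, Matrix.cons_val_zero,
      Matrix.cons_val_one, Matrix.head_cons] at e0 ⊢
    linear_combination l1 * e0
  · intro X Y
    have e1 := heq.2.1 X Y
    simp only [dd, w2, cF, LinearMap.smul_apply, smul_eq_mul, map_mul, Complex.conj_ofReal,
      Matrix.cons_val_zero, Matrix.cons_val_one, Matrix.head_cons,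
      Matrix.cons_val_two, Matrix.tail_cons] at e1 ⊢
    linear_combination (l1 * (r : ℂ)) * e1
  · intro X Y
    have e2 := heq.2.2.1 X Y
    simp only [dd, w2, cF, LinearMap.smul_apply, smul_eq_mul, map_mul, Complex.conj_ofReal,
      Matrix.cons_val_zero, Matrix.cons_val_one, Matrix.head_cons,
      Matrix.cons_val_two, Matrix.tail_cons] at e2 ⊢
    rcases hεr with h | h
    · subst h
      push_cast at e2 ⊢
      linear_combination (r : ℂ) * e2 -
        (Complex.I * (δ : ℂ) * (r : ℂ) *
          (η 0 X * (starRingEnd ℂ) (η 1 Y) - η 0 Y * (starRingEnd ℂ) (η 1 X))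
         - Complex.I * (δ : ℂ) * (r : ℂ) *
          (η 1 X * (starRingEnd ℂ) (η 0 Y) - η 1 Y * (starRingEnd ℂ) (η 0 X))) * h1
    · subst h
      push_cast at e2 ⊢
      linear_combination e2 -
        (Complex.I * (ε : ℂ) *
          (η 0 X * (starRingEnd ℂ) (η 0 Y) - η 0 Y * (starRingEnd ℂ) (η 0 X))
         + Complex.I * (δ : ℂ) *
          (η 0 X * (starRingEnd ℂ) (η 1 Y) - η 0 Y * (starRingEnd ℂ) (η 1 X))
         - Complex.I * (δ : ℂ) *
          (η 1 X * (starRingEnd ℂ) (η 0 Y) - η 1 Y * (starRingEnd ℂ) (η 0 X))) * h1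
  · intro X Y
    have e3 := heq.2.2.2 X Y
    subst hB
    simp only [dd, w2, cF, LinearMap.smul_apply, smul_eq_mul, map_mul, Complex.conj_ofReal,
      Complex.ofReal_zero, zero_mul, add_zero, Matrix.cons_val_zero,
      Matrix.cons_val_one, Matrix.head_cons, Matrix.cons_val_three, Matrix.tail_cons] at e3 ⊢
    linear_combination l4 * e3 -
      ((η 0 X * η 1 Y - η 0 Y * η 1 X)) * ha -
      (l4 * B * (η 0 X * (starRingEnd ℂ) (η 0 Y) - η 0 Y * (starRingEnd ℂ) (η 0 X))) * h1


lemma sq_root_exists (z : ℂ) : ∃ w : ℂ, w ^ 2 = z :=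
  IsAlgClosed.exists_pow_nat_eq z (n := 2) (by norm_num)

lemma unit_of_abs_sq_one {l1 : ℂ} (h : ‖l1 ^ 2‖ = 1) :
    l1 * (starRingEnd ℂ) l1 = 1 := by
  rw [Complex.mul_conj]
  have : Complex.normSq l1 = 1 := by
    rw [Complex.normSq_eq_norm_sq, ← norm_pow, h]
  rw [this]; norm_num

theorem reduction_nu_zero
    {g : Type*} [LieRing g] [LieAlgebra ℝ g]
    (h8 : Module.finrank ℝ g = 8) (hg : IsNilpotentLie g)
    (Jc : ComplexStructure g) (hw : Jc.IsWnN)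
    (η : Fin 4 → (g →ₗ[ℝ] ℂ)) (ε δ : ℝ) (A B : ℂ)
    (hη : Is10Basis Jc η) (hε : ε = 0 ∨ ε = 1) (hδ : δ = 1 ∨ δ = -1)
    (heq : StarEq η ε δ 0 A B) :
    ∃ (ω : Fin 4 → (g →ₗ[ℝ] ℂ)) (a : ℝ) (B' : ℂ),
      Is10Basis Jc ω ∧ StarEq ω ε δ 0 (a : ℂ) B' ∧
      ((a = 0 ∧ B' = 0) ∨
       (a = 0 ∧ B' = 1) ∨
       (a = 1 ∧ (B' = 0 ∨ B' = 1) ∧ ε = 0) ∨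
       (a = 1 ∧ (∃ b : ℝ, 0 ≤ b ∧ B' = (b : ℂ)) ∧ ε = 1)) := by
  by_cases hA : A = 0
  · by_cases hb : B = 0
    · obtain ⟨ω, hω, hs⟩ := rescale Jc η ε δ A B hη heq 1 1 1 0 0
        (by simp) one_ne_zero one_ne_zero (Or.inr rfl) (by simp [hA]) (by simp [hb])
      exact ⟨ω, 0, 0, hω, hs, Or.inl ⟨rfl, rfl⟩⟩
    · obtain ⟨ω, hω, hs⟩ := rescale Jc η ε δ A B hη heq 1 B⁻¹ 1 0 1
        (by simp) one_ne_zero (inv_ne_zero hb) (Or.inr rfl)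
        (by simp [hA]) (inv_mul_cancel₀ hb).symm
      exact ⟨ω, 0, 1, hω, hs, Or.inr (Or.inl ⟨rfl, rfl⟩)⟩
  · by_cases hb : B = 0
    · obtain ⟨ω, hω, hs⟩ := rescale Jc η ε δ A B hη heq 1 A⁻¹ 1 1 0
        (by simp) one_ne_zero (inv_ne_zero hA) (Or.inr rfl)
        (by field_simp; norm_num) (by simp [hb])
      refine ⟨ω, 1, 0, hω, hs, ?_⟩
      rcases hε with h | h
      · exact Or.inr (Or.inr (Or.inl ⟨rfl, Or.inl rfl, h⟩))
      · exact Or.inr (Or.inr (Or.inr ⟨rfl, ⟨0, le_refl _, by norm_num⟩, h⟩))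
    · rcases hε with hε0 | hε1
      · -- ε = 0 : normalize to a = 1, B' = 1
        set z : ℂ := A / B with hz
        have hzne : z ≠ 0 := div_ne_zero hA hb
        have habsz : ‖z‖ ≠ 0 := by
          simpa using hzne
        obtain ⟨l1, hl1⟩ := sq_root_exists (z / (‖z‖ : ℂ))
        have h1 : l1 * (starRingEnd ℂ) l1 = 1 := by
          apply unit_of_abs_sq_one
          rw [hl1, norm_div, Complex.norm_real, norm_norm,
            div_self habsz]
        obtain ⟨ω, hω, hs⟩ := rescale Jc η ε δ A B hη heq l1 B⁻¹ (‖z‖) 1 1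
          h1 habsz (inv_ne_zero hb) (Or.inl hε0)
          (by
            push_cast
            rw [one_mul, hl1,
              div_mul_cancel₀ _ (Complex.ofReal_ne_zero.mpr habsz), hz, div_eq_inv_mul])
          (inv_mul_cancel₀ hb).symm
        exact ⟨ω, 1, 1, hω, hs, Or.inr (Or.inr (Or.inl ⟨rfl, Or.inr rfl, hε0⟩))⟩
      · -- ε = 1 : normalize to a = 1, B' = |B/A| ≥ 0
        set z : ℂ := B / A with hz
        have hzne : z ≠ 0 := div_ne_zero hb hA
        have habsz : ‖z‖ ≠ 0 := by simpa using hzne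
        obtain ⟨l1, hl1⟩ := sq_root_exists ((starRingEnd ℂ) z / (‖z‖ : ℂ))
        have h1 : l1 * (starRingEnd ℂ) l1 = 1 := by
          apply unit_of_abs_sq_one
          rw [hl1, norm_div, Complex.norm_real, Complex.norm_conj,
            norm_norm, div_self habsz]
        have hmul : (starRingEnd ℂ) z * z = ((‖z‖ : ℝ) : ℂ) ^ 2 := by
          rw [mul_comm, Complex.mul_conj, Complex.normSq_eq_norm_sq]
          push_cast; ring
        obtain ⟨ω, hω, hs⟩ := rescale Jc η ε δ A B hη heq l1 (l1 ^ 2 / A) 1 1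
          ((‖z‖ : ℝ) : ℂ)
          h1 one_ne_zero (div_ne_zero (pow_ne_zero 2 (by
            intro h; rw [h] at h1; simp at h1)) hA) (Or.inr rfl)
          (by field_simp; norm_num)
          (by
            have hBz : B = z * A := by rw [hz, div_mul_cancel₀ _ hA]
            rw [div_mul_eq_mul_div, eq_div_iff hA, hl1, div_mul_eq_mul_div,
              eq_div_iff (Complex.ofReal_ne_zero.mpr habsz)]
            linear_combination (-A) * hmul - (starRingEnd ℂ) z * hBz)
        exact ⟨ω, 1, ((‖z‖ : ℝ) : ℂ), hω, hs,
          Or.inr (Or.inr (Or.inr ⟨rfl, ⟨‖z‖, norm_nonneg z, rfl⟩, hε1⟩))⟩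

end Paper
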